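/- arXiv:2505.06452 — 2 statements merged into one kernel-verified Lean document; each statement's English description precedes it below -/
import Mathlib

section
/- Let ψ(X,R,Y) = μ̄(X) + (R/π(X))(Y − μ̄(X)) − E[Y] with R ⊥ Y | X, E[R|X] = π(X) > 0 a.s. Then Var(ψ) = E[ ((1 − π(X))/π(X)) · E[(Y − μ̄(X))² | X] ] + Var(Y). -/
open MeasureTheory ProbabilityTheory

set_option maxHeartbeats 1000000
set_option synthInstance.maxHeartbeats 200000

section Aux

open Filter

variable {Ω : Type*} {mX : MeasurableSpace Ω} {mΩ : MeasurableSpace Ω} [StandardBorelSpace Ω]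
  {μ : Measure Ω} [IsProbabilityMeasure μ]

/-- Integrability of a product of two `L²` functions. -/
private lemma integrable_mul_of_memL2 {f g : Ω → ℝ} (hf : MemLp f 2 μ) (hg : MemLp g 2 μ) :
    Integrable (fun ω => f ω * g ω) μ := by
  refine Integrable.mono' (hf.integrable_sq.add hg.integrable_sq)
    (hf.aestronglyMeasurable.mul hg.aestronglyMeasurable) ?_
  refine Filter.Eventually.of_forall fun ω => ?_
  have h := sq_nonneg (|f ω| - |g ω|)
  have h2 : ‖f ω * g ω‖ = |f ω| * |g ω| := by rw [Real.norm_eq_abs, abs_mul]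
  simp only [Pi.add_apply]
  rw [h2]
  nlinarith [sq_abs (f ω), sq_abs (g ω), sq_nonneg (f ω), sq_nonneg (g ω),
    mul_nonneg (abs_nonneg (f ω)) (abs_nonneg (g ω))]

/-- The conditional expectation kernel gives a.e. measure zero to null sets. -/
private lemma condExpKernel_ae_zero (hmX : mX ≤ mΩ)
    {N : Set Ω} (hN : μ N = 0) :
    ∀ᵐ a ∂(μ.trim hmX), condExpKernel μ mX a N = 0 := by
  obtain ⟨M, hNM, hMmeas, hM0⟩ := exists_measurable_superset_of_null hN
  have h1 : (fun ω => (condExpKernel μ mX ω M).toReal) =ᵐ[μ.trim hmX]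
      μ[M.indicator (fun _ => (1 : ℝ)) | mX] := condExpKernel_ae_eq_trim_condExp hmX hMmeas
  have h2 : μ[M.indicator (fun _ => (1 : ℝ)) | mX] =ᵐ[μ] 0 := by
    have hind : M.indicator (fun _ => (1 : ℝ)) =ᵐ[μ] 0 := by
      filter_upwards [measure_eq_zero_iff_ae_notMem.mp hM0] with ω hω
      simp [Set.indicator_of_notMem hω]
    exact (condExp_congr_ae hind).trans (by rw [condExp_zero])
  have h2' : μ[M.indicator (fun _ => (1 : ℝ)) | mX] =ᵐ[μ.trim hmX] 0 :=
    (StronglyMeasurable.ae_eq_trim_iff hmX stronglyMeasurable_condExp stronglyMeasurable_const).mpr h2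
  filter_upwards [h1, h2'] with a ha1 ha2
  have hfin : condExpKernel μ mX a M ≠ ⊤ := measure_ne_top _ _
  have : (condExpKernel μ mX a M).toReal = 0 := by rw [ha1, ha2]; rfl
  have hM : condExpKernel μ mX a M = 0 := by
    rcases (ENNReal.toReal_eq_zero_iff _).mp this with h | h
    · exact h
    · exact absurd h hfin
  exact measure_mono_null hNM hM

/-- Key lemma: under conditional independence of `R` and `Y` given `mX`, with `R` an indicator,
the conditional expectation of `R` times a function of `Y` factorizes. -/
private lemma condexp_mul_of_condIndepFun (hmX : mX ≤ mΩ)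
    {R Y : Ω → ℝ} (hR : Measurable R) (hR01 : ∀ ω, R ω = 0 ∨ R ω = 1)
    (hY : Measurable Y) (hInd : CondIndepFun mX hmX R Y μ)
    {g : Ω → ℝ} (hg : StronglyMeasurable[MeasurableSpace.comap Y inferInstance] g)
    (hgi : Integrable g μ) :
    μ[fun ω => R ω * g ω | mX] =ᵐ[μ] fun ω => (μ[R | mX]) ω * (μ[g | mX]) ω := by
  have hRb : ∀ᵐ ω ∂μ, ‖R ω‖ ≤ 1 := Filter.Eventually.of_forall fun ω => by rcases hR01 ω with h | h <;> simp [h]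
  have hRint : Integrable R μ :=
    Integrable.mono' (integrable_const 1) hR.aestronglyMeasurable
      (Filter.Eventually.of_forall fun ω => by rcases hR01 ω with h | h <;> simp [h])
  have hRind : R = (R ⁻¹' {1}).indicator fun _ => (1 : ℝ) := by
    funext ω
    rcases hR01 ω with h | h
    · have hmem : ω ∉ R ⁻¹' {1} := by simp [Set.mem_preimage, h]
      simp [Set.indicator_of_notMem hmem, h]
    · have hmem : ω ∈ R ⁻¹' {1} := by simp [Set.mem_preimage, h]
      simp [Set.indicator_of_mem hmem, h]
  -- the base case : indicators of preimages under `Y`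
  have hbase : ∀ (c : ℝ) (u : Set ℝ), MeasurableSet u →
      (μ[fun ω => R ω * (Y ⁻¹' u).indicator (fun _ => c) ω | mX] =ᵐ[μ]
        fun ω => (μ[R | mX]) ω * (μ[(Y ⁻¹' u).indicator (fun _ => c) | mX]) ω) := by
    intro c u hu
    have hmul := (condIndepFun_iff_condExp_inter_preimage_eq_mul hR hY).mp hInd {1} u
      (measurableSet_singleton 1) hu
    have e1 : (fun ω => R ω * (Y ⁻¹' u).indicator (fun _ => c) ω)
        = fun ω => c * (R ⁻¹' {1} ∩ Y ⁻¹' u).indicator (fun _ => (1 : ℝ)) ω := by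
      funext ω
      by_cases hYu : ω ∈ Y ⁻¹' u
      · rcases hR01 ω with h | h
        · have hmem : ω ∉ R ⁻¹' {1} ∩ Y ⁻¹' u := by
            simp [Set.mem_inter_iff, Set.mem_preimage, h]
          simp [Set.indicator_of_mem hYu, Set.indicator_of_notMem hmem, h]
        · have hmem : ω ∈ R ⁻¹' {1} ∩ Y ⁻¹' u := ⟨by simp [Set.mem_preimage, h], hYu⟩
          simp [Set.indicator_of_mem hYu, Set.indicator_apply, hmem, h]
      · have hmem : ω ∉ R ⁻¹' {1} ∩ Y ⁻¹' u := fun hmem => hYu hmem.2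
        simp [Set.indicator_of_notMem hYu, Set.indicator_of_notMem hmem]
    have e2 : (Y ⁻¹' u).indicator (fun _ => c)
        = fun ω => c * (Y ⁻¹' u).indicator (fun _ => (1 : ℝ)) ω := by
      funext ω; by_cases hYu : ω ∈ Y ⁻¹' u <;> simp [hYu]
    rw [e1]
    calc μ[fun ω => c * (R ⁻¹' {1} ∩ Y ⁻¹' u).indicator (fun _ => (1 : ℝ)) ω | mX]
        =ᵐ[μ] c • μ[(R ⁻¹' {1} ∩ Y ⁻¹' u).indicator (fun _ => (1 : ℝ)) | mX] :=
          condExp_smul c _ mX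
      _ =ᵐ[μ] fun ω => (μ[R | mX]) ω * (μ[(Y ⁻¹' u).indicator (fun _ => c) | mX]) ω := by
          have h3 : μ[(Y ⁻¹' u).indicator (fun _ => c) | mX] =ᵐ[μ]
              c • μ[(Y ⁻¹' u).indicator (fun _ => (1 : ℝ)) | mX] := by
            rw [e2]; exact condExp_smul c _ mX
          have h4 : μ[R | mX] = μ[(R ⁻¹' {1}).indicator (fun _ => (1 : ℝ)) | mX] := by
            rw [← hRind]
          filter_upwards [hmul, h3] with ω h1 h2
          simp only [Pi.smul_apply, smul_eq_mul] at h2 ⊢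
          rw [h1, h2, h4]
          ring
  -- extension to all integrable `σ(Y)`-measurable functions
  have hmain : ∀ f : Ω → ℝ, Integrable f (μ.trim hY.comap_le) →
      μ[fun ω => R ω * f ω | mX] =ᵐ[μ] fun ω => (μ[R | mX]) ω * (μ[f | mX]) ω := by
    refine @Integrable.induction Ω ℝ (MeasurableSpace.comap Y inferInstance) _
      (μ.trim hY.comap_le)
      (fun f => μ[fun ω => R ω * f ω | mX] =ᵐ[μ]
        fun ω => (μ[R | mX]) ω * (μ[f | mX]) ω) ?_ ?_ ?_ ?_
    · intro c s hs hμs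
      obtain ⟨u, hu, rfl⟩ := MeasurableSpace.measurableSet_comap.mp hs
      exact hbase c u hu
    · intro f f' hdisj hfν hf'ν hPf hPf'
      have hf1 : Integrable f μ := integrable_of_integrable_trim _ hfν
      have hf1' : Integrable f' μ := integrable_of_integrable_trim _ hf'ν
      have hRf : Integrable (fun ω => R ω * f ω) μ :=
        hf1.bdd_mul hR.aestronglyMeasurable hRb
      have hRf' : Integrable (fun ω => R ω * f' ω) μ :=
        hf1'.bdd_mul hR.aestronglyMeasurable hRb
      have e : (fun ω => R ω * (f + f') ω)
          = (fun ω => R ω * f ω) + fun ω => R ω * f' ω := by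
        funext ω; simp only [Pi.add_apply]; ring
      rw [e]
      calc μ[(fun ω => R ω * f ω) + fun ω => R ω * f' ω | mX]
          =ᵐ[μ] μ[fun ω => R ω * f ω | mX] + μ[fun ω => R ω * f' ω | mX] :=
            condExp_add hRf hRf' mX
        _ =ᵐ[μ] fun ω => (μ[R | mX]) ω * (μ[f + f' | mX]) ω := by
            filter_upwards [hPf, hPf', condExp_add hf1 hf1' mX] with ω h1 h2 h3
            simp only [Pi.add_apply] at h3 ⊢
            rw [h3, h1, h2]
            ring
    · -- closedness in L¹
      have hRcle : ∀ᵐ ω ∂μ, |(μ[R | mX]) ω| ≤ 1 := by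
        have h1 : (0 : Ω → ℝ) ≤ᵐ[μ] μ[R | mX] :=
          condExp_nonneg (Filter.Eventually.of_forall fun ω => by
            rcases hR01 ω with h | h <;> simp [h])
        have h2 : μ[R | mX] ≤ᵐ[μ] μ[fun _ => (1 : ℝ) | mX] :=
          condExp_mono hRint (integrable_const 1)
            (Filter.Eventually.of_forall fun ω => by rcases hR01 ω with h | h <;> simp [h])
        have h3 : μ[fun _ => (1 : ℝ) | mX] = fun _ => (1 : ℝ) := condExp_const hmX 1
        filter_upwards [h1, h2] with ω hω1 hω2
        rw [h3] at hω2
        rw [abs_le]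
        have hω1' : (0 : ℝ) ≤ (μ[R | mX]) ω := hω1
        exact ⟨by linarith, hω2⟩
      refine IsSeqClosed.isClosed ?_
      intro fs flim hfs hlim
      haveI : Fact ((1 : ENNReal) ≤ 1) := ⟨le_rfl⟩
      have htend : Filter.Tendsto
          (fun n => eLpNorm (⇑(fs n) - ⇑flim) 1 (μ.trim hY.comap_le)) Filter.atTop (nhds 0) :=
        (Lp.tendsto_Lp_iff_tendsto_eLpNorm' fs flim).mp hlim
      set g : Ω → ℝ := ⇑flim with hg_def
      have hgν : Integrable g (μ.trim hY.comap_le) := L1.integrable_coeFn flim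
      have hgμ : Integrable g μ := integrable_of_integrable_trim _ hgν
      have hRg : Integrable (fun ω => R ω * g ω) μ := hgμ.bdd_mul hR.aestronglyMeasurable hRb
      set A : Ω → ℝ := μ[fun ω => R ω * g ω | mX] with hA_def
      set B : Ω → ℝ := fun ω => (μ[R | mX]) ω * (μ[g | mX]) ω with hB_def
      have hmeasA : AEStronglyMeasurable A μ :=
        (stronglyMeasurable_condExp.mono hmX).aestronglyMeasurable
      have hmeasB : AEStronglyMeasurable B μ :=
        ((stronglyMeasurable_condExp.mono hmX).aestronglyMeasurable).mul
          ((stronglyMeasurable_condExp.mono hmX).aestronglyMeasurable)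
      have key : ∀ n, eLpNorm (A - B) 1 μ
          ≤ eLpNorm (⇑(fs n) - ⇑flim) 1 (μ.trim hY.comap_le)
            + eLpNorm (⇑(fs n) - ⇑flim) 1 (μ.trim hY.comap_le) := by
        intro n
        set gn : Ω → ℝ := ⇑(fs n) with hgn_def
        have hgnν : Integrable gn (μ.trim hY.comap_le) := L1.integrable_coeFn (fs n)
        have hgnμ : Integrable gn μ := integrable_of_integrable_trim _ hgnν
        have hRgn : Integrable (fun ω => R ω * gn ω) μ :=
          hgnμ.bdd_mul hR.aestronglyMeasurable hRb
        have hen : eLpNorm (gn - g) 1 (μ.trim hY.comap_le) = eLpNorm (gn - g) 1 μ :=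
          eLpNorm_trim_ae _ ((Lp.aestronglyMeasurable (fs n)).sub (Lp.aestronglyMeasurable flim))
        set An : Ω → ℝ := μ[fun ω => R ω * gn ω | mX] with hAn_def
        set Bn : Ω → ℝ := fun ω => (μ[R | mX]) ω * (μ[gn | mX]) ω with hBn_def
        have hPn : An =ᵐ[μ] Bn := hfs n
        have est1 : eLpNorm (A - An) 1 μ ≤ eLpNorm (gn - g) 1 μ := by
          have h1 : A - An =ᵐ[μ] μ[(fun ω => R ω * g ω) - fun ω => R ω * gn ω | mX] :=
            (condExp_sub hRg hRgn mX).symm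
          calc eLpNorm (A - An) 1 μ
              = eLpNorm (μ[(fun ω => R ω * g ω) - fun ω => R ω * gn ω | mX]) 1 μ :=
                eLpNorm_congr_ae h1
            _ ≤ eLpNorm ((fun ω => R ω * g ω) - fun ω => R ω * gn ω) 1 μ :=
                eLpNorm_one_condExp_le_eLpNorm _
            _ ≤ eLpNorm (gn - g) 1 μ := by
                refine eLpNorm_mono_ae (Filter.Eventually.of_forall fun ω => ?_)
                simp only [Pi.sub_apply]
                rw [show R ω * g ω - R ω * gn ω = R ω * (g ω - gn ω) by ring]
                rw [Real.norm_eq_abs, Real.norm_eq_abs, abs_mul, abs_sub_comm]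
                rcases hR01 ω with h | h <;> simp [h]
        have est2 : eLpNorm (Bn - B) 1 μ ≤ eLpNorm (gn - g) 1 μ := by
          have h2 : μ[gn | mX] - μ[g | mX] =ᵐ[μ] μ[gn - g | mX] := (condExp_sub hgnμ hgμ mX).symm
          calc eLpNorm (Bn - B) 1 μ
              ≤ eLpNorm (μ[gn | mX] - μ[g | mX]) 1 μ := by
                refine eLpNorm_mono_ae ?_
                filter_upwards [hRcle] with ω hω
                simp only [Pi.sub_apply, hBn_def, hB_def]
                rw [show (μ[R|mX]) ω * (μ[gn|mX]) ω - (μ[R|mX]) ω * (μ[g|mX]) ω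
                  = (μ[R|mX]) ω * ((μ[gn|mX]) ω - (μ[g|mX]) ω) by ring]
                rw [Real.norm_eq_abs, Real.norm_eq_abs, abs_mul]
                calc |(μ[R|mX]) ω| * |(μ[gn|mX]) ω - (μ[g|mX]) ω|
                    ≤ 1 * |(μ[gn|mX]) ω - (μ[g|mX]) ω| := by
                      exact mul_le_mul_of_nonneg_right hω (abs_nonneg _)
                  _ = |(μ[gn|mX]) ω - (μ[g|mX]) ω| := one_mul _
            _ = eLpNorm (μ[gn - g | mX]) 1 μ := eLpNorm_congr_ae h2
            _ ≤ eLpNorm (gn - g) 1 μ := eLpNorm_one_condExp_le_eLpNorm _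
        have hsplit : A - B =ᵐ[μ] (A - An) + (Bn - B) := by
          filter_upwards [hPn] with ω hω
          simp only [Pi.sub_apply, Pi.add_apply]
          rw [show An ω = Bn ω from hω]
          ring
        calc eLpNorm (A - B) 1 μ = eLpNorm ((A - An) + (Bn - B)) 1 μ :=
              eLpNorm_congr_ae hsplit
          _ ≤ eLpNorm (A - An) 1 μ + eLpNorm (Bn - B) 1 μ :=
              eLpNorm_add_le (hmeasA.sub (stronglyMeasurable_condExp.mono hmX).aestronglyMeasurable)
                ((((stronglyMeasurable_condExp.mono hmX).aestronglyMeasurable).mul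
                  ((stronglyMeasurable_condExp.mono hmX).aestronglyMeasurable)).sub hmeasB) le_rfl
          _ ≤ eLpNorm (gn - g) 1 μ + eLpNorm (gn - g) 1 μ := add_le_add est1 est2
          _ = _ := by rw [hen]
      have htend2 : Filter.Tendsto
          (fun n => eLpNorm (⇑(fs n) - ⇑flim) 1 (μ.trim hY.comap_le)
            + eLpNorm (⇑(fs n) - ⇑flim) 1 (μ.trim hY.comap_le)) Filter.atTop (nhds 0) := by
        simpa using htend.add htend
      have h0 : eLpNorm (A - B) 1 μ ≤ 0 :=
        ge_of_tendsto htend2 (Filter.Eventually.of_forall key)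
      have h0' : eLpNorm (A - B) 1 μ = 0 := le_antisymm h0 zero_le
      have hae : (A - B) =ᵐ[μ] 0 :=
        (eLpNorm_eq_zero_iff (hmeasA.sub hmeasB) one_ne_zero).mp h0'
      show A =ᵐ[μ] B
      filter_upwards [hae] with ω hω
      have : A ω - B ω = 0 := hω
      linarith
    · intro f f' hff' hfν hPf
      have hff : f =ᵐ[μ] f' := ae_eq_of_ae_eq_trim hff'
      have h1 : μ[fun ω => R ω * f ω | mX] =ᵐ[μ] μ[fun ω => R ω * f' ω | mX] :=
        condExp_congr_ae (by filter_upwards [hff] with ω h; rw [h])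
      refine (h1.symm.trans hPf).trans ?_
      filter_upwards [condExp_congr_ae hff] with ω h
      rw [h]
  exact hmain g (hgi.trim hY.comap_le hg)

end Aux


/-- Main computation, with binders ordered so that `mΩ` is the default instance. -/
private theorem aipw_aux {Ω : Type*} {mX mΩ : MeasurableSpace Ω} [StandardBorelSpace Ω]
    {μ : Measure Ω} [IsProbabilityMeasure μ]
    (hmX : mX ≤ mΩ)
    (R Y : Ω → ℝ)
    (hR01 : ∀ ω, R ω = 0 ∨ R ω = 1)
    (hMAR : CondIndepFun mX hmX R Y μ)
    (πX : Ω → ℝ)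
    (hπX : Measurable[mX] πX)
    (hπ : πX =ᵐ[μ] μ[R | mX])
    (hπpos : ∀ᵐ ω ∂μ, 0 < πX ω)
    (mbar : Ω → ℝ) (hmbar : Measurable[mX] mbar)
    (hY2 : MemLp Y 2 μ) (hmbar2 : MemLp mbar 2 μ)
    (hψ2 : MemLp (fun ω =>
        mbar ω + (R ω / πX ω) * (Y ω - mbar ω) - ∫ ω', Y ω' ∂μ) 2 μ)
    (hwint : Integrable (fun ω =>
        ((1 - πX ω) / πX ω) * (μ[fun ω' => (Y ω' - mbar ω') ^ 2 | mX]) ω) μ) :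
    variance (fun ω =>
        mbar ω + (R ω / πX ω) * (Y ω - mbar ω) - ∫ ω', Y ω' ∂μ) μ =
      (∫ ω, ((1 - πX ω) / πX ω) *
          (μ[fun ω' => (Y ω' - mbar ω') ^ 2 | mX]) ω ∂μ) + variance Y μ := by
  classical
  by_cases hRint : Integrable R μ
  swap
  · exfalso
    rw [condExp_of_not_integrable hRint] at hπ
    obtain ⟨ω, h1, h2⟩ := (hπ.and hπpos).exists
    rw [h1] at h2
    simpa using h2
  set c : ℝ := ∫ ω', Y ω' ∂μ with hc
  -- measurable versions of `Y` and `R`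
  set Y' : Ω → ℝ := hY2.1.mk Y with hY'def
  have hY'meas : Measurable Y' := hY2.1.stronglyMeasurable_mk.measurable
  have hYY' : Y =ᵐ[μ] Y' := hY2.1.ae_eq_mk
  set A : Set Ω := (hRint.1.mk R) ⁻¹' {1} with hAdef
  have hAmeas : MeasurableSet A := hRint.1.measurable_mk (measurableSet_singleton 1)
  set R' : Ω → ℝ := A.indicator (fun _ => (1 : ℝ)) with hR'def
  have hR'meas : Measurable R' := measurable_const.indicator hAmeas
  have hR'01 : ∀ ω, R' ω = 0 ∨ R' ω = 1 := by
    intro ω; by_cases h : ω ∈ A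
    · right; simp [hR'def, Set.indicator_of_mem h]
    · left; simp [hR'def, Set.indicator_of_notMem h]
  have hRR' : R =ᵐ[μ] R' := by
    filter_upwards [hRint.1.ae_eq_mk] with ω h
    rcases hR01 ω with h0 | h1
    · have hm : ω ∉ A := by simp [hAdef, Set.mem_preimage, ← h, h0]
      simp [hR'def, Set.indicator_of_notMem hm, h0]
    · have hm : ω ∈ A := by simp [hAdef, Set.mem_preimage, ← h, h1]
      simp [hR'def, Set.indicator_of_mem hm, h1]
  -- transfer conditional independence to the measurable versions
  have hMAR' : CondIndepFun mX hmX R' Y' μ := by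
    have hnull : ∀ {f f' : Ω → ℝ}, f =ᵐ[μ] f' →
        ∀ᵐ a ∂(μ.trim hmX), f =ᵐ[condExpKernel μ mX a] f' := by
      intro f f' hff
      have hN : μ {ω | ¬ f ω = f' ω} = 0 := ae_iff.mp hff
      filter_upwards [condExpKernel_ae_zero hmX hN] with a ha
      exact ae_iff.mpr ha
    exact Kernel.IndepFun.congr' hMAR (hnull hRR') (hnull hYY')
  have hπ' : πX =ᵐ[μ] μ[R' | mX] := hπ.trans (condExp_congr_ae hRR')
  -- integrability facts
  have hY2' : MemLp Y' 2 μ := hY2.ae_eq hYY'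
  have hY'int : Integrable Y' μ := hY2'.integrable one_le_two
  have hY'sq : Integrable (fun ω => Y' ω ^ 2) μ := hY2'.integrable_sq
  have hmbarint : Integrable mbar μ := hmbar2.integrable one_le_two
  have hR'int : Integrable R' μ := hRint.congr hRR'
  have hR'b : ∀ᵐ ω ∂μ, ‖R' ω‖ ≤ 1 := Filter.Eventually.of_forall fun ω => by rcases hR'01 ω with h | h <;> simp [h]
  have hR'asm : AEStronglyMeasurable R' μ := hR'meas.aestronglyMeasurable
  have hRmul : ∀ {f : Ω → ℝ}, Integrable f μ → Integrable (fun ω => R' ω * f ω) μ :=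
    fun hf => hf.bdd_mul hR'asm hR'b
  -- factorization of conditional expectations
  have hYc : Measurable[MeasurableSpace.comap Y' inferInstance] Y' :=
    measurable_iff_comap_le.mpr le_rfl
  have hfact : ∀ (g : Ω → ℝ), StronglyMeasurable[MeasurableSpace.comap Y' inferInstance] g →
      Integrable g μ →
      μ[fun ω => R' ω * g ω | mX] =ᵐ[μ] fun ω => πX ω * (μ[g | mX]) ω := by
    intro g hg hgi
    refine (condexp_mul_of_condIndepFun hmX hR'meas hR'01 hY'meas hMAR' hg hgi).trans ?_
    filter_upwards [hπ'] with ω hω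
    rw [hω]
  have hK1 : μ[fun ω => R' ω * Y' ω | mX] =ᵐ[μ] fun ω => πX ω * (μ[Y' | mX]) ω :=
    hfact Y' hYc.stronglyMeasurable hY'int
  have hK2 : μ[fun ω => R' ω * Y' ω ^ 2 | mX] =ᵐ[μ]
      fun ω => πX ω * (μ[fun ω' => Y' ω' ^ 2 | mX]) ω :=
    hfact _ (hYc.pow_const 2).stronglyMeasurable hY'sq
  have hKR : μ[R' | mX] =ᵐ[μ] πX := hπ'.symm
  -- conditional expectation of R' times quadratics in Y'
  have hquad : ∀ (a : Ω → ℝ), Measurable[mX] a → MemLp a 2 μ →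
      μ[fun ω => R' ω * ((Y' ω - mbar ω) * (Y' ω - a ω)) | mX] =ᵐ[μ]
        fun ω => πX ω * (μ[fun ω' => (Y' ω' - mbar ω') * (Y' ω' - a ω') | mX]) ω := by
    intro a ham ha2
    have hams : AEStronglyMeasurable a μ := ha2.aestronglyMeasurable
    have haint : Integrable a μ := ha2.integrable one_le_two
    have hco1 : Integrable (fun ω => (mbar ω + a ω) * Y' ω) μ :=
      integrable_mul_of_memL2 (hmbar2.add ha2) hY2'
    have hco2 : Integrable (fun ω => mbar ω * a ω) μ := integrable_mul_of_memL2 hmbar2 ha2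
    have hq : Integrable (fun ω => (Y' ω - mbar ω) * (Y' ω - a ω)) μ :=
      integrable_mul_of_memL2 (hY2'.sub hmbar2) (hY2'.sub ha2)
    have hRq : Integrable (fun ω => R' ω * ((Y' ω - mbar ω) * (Y' ω - a ω))) μ := hRmul hq
    have ht1 : Integrable (fun ω => R' ω * Y' ω ^ 2) μ := hRmul hY'sq
    have ht2 : Integrable (fun ω => (mbar ω + a ω) * (R' ω * Y' ω)) μ := by
      refine Integrable.mono' hco1.abs
        ((hmbar2.aestronglyMeasurable.add hams).mul (hR'asm.mul hY2'.aestronglyMeasurable)) ?_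
      refine Filter.Eventually.of_forall fun ω => ?_
      rcases hR'01 ω with h | h
      · simp only [h, zero_mul, mul_zero, norm_zero]; exact abs_nonneg _
      · simp only [h, one_mul, Real.norm_eq_abs]; exact le_rfl
    have ht3 : Integrable (fun ω => (mbar ω * a ω) * R' ω) μ := by
      refine Integrable.mono' hco2.abs
        ((hmbar2.aestronglyMeasurable.mul hams).mul hR'asm) ?_
      refine Filter.Eventually.of_forall fun ω => ?_
      rcases hR'01 ω with h | h
      · simp only [h, mul_zero, norm_zero]; exact abs_nonneg _
      · simp only [h, mul_one, Real.norm_eq_abs]; exact le_rfl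
    have hRY'int : Integrable (fun ω => R' ω * Y' ω) μ := hRmul hY'int
    -- LHS expansion
    have he : (fun ω => R' ω * ((Y' ω - mbar ω) * (Y' ω - a ω)))
        = fun ω => (R' ω * Y' ω ^ 2 - (mbar ω + a ω) * (R' ω * Y' ω))
          + (mbar ω * a ω) * R' ω := by
      funext ω; ring
    have hL1 : μ[fun ω => R' ω * ((Y' ω - mbar ω) * (Y' ω - a ω)) | mX] =ᵐ[μ]
        μ[fun ω => R' ω * Y' ω ^ 2 - (mbar ω + a ω) * (R' ω * Y' ω) | mX]
          + μ[fun ω => (mbar ω * a ω) * R' ω | mX] := by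
      rw [he]; exact condExp_add (ht1.sub ht2) ht3 mX
    have hL2 : μ[fun ω => R' ω * Y' ω ^ 2 - (mbar ω + a ω) * (R' ω * Y' ω) | mX] =ᵐ[μ]
        μ[fun ω => R' ω * Y' ω ^ 2 | mX] - μ[fun ω => (mbar ω + a ω) * (R' ω * Y' ω) | mX] :=
      condExp_sub ht1 ht2 mX
    have hL3 : μ[fun ω => (mbar ω + a ω) * (R' ω * Y' ω) | mX] =ᵐ[μ]
        (fun ω => mbar ω + a ω) * μ[fun ω => R' ω * Y' ω | mX] :=
      condExp_mul_of_stronglyMeasurable_left ((hmbar.add ham).stronglyMeasurable) ht2 hRY'int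
    have hL4 : μ[fun ω => (mbar ω * a ω) * R' ω | mX] =ᵐ[μ]
        (fun ω => mbar ω * a ω) * μ[R' | mX] :=
      condExp_mul_of_stronglyMeasurable_left ((hmbar.mul ham).stronglyMeasurable) ht3 hR'int
    -- RHS expansion
    have he' : (fun ω => (Y' ω - mbar ω) * (Y' ω - a ω))
        = fun ω => (Y' ω ^ 2 - (mbar ω + a ω) * Y' ω) + mbar ω * a ω := by
      funext ω; ring
    have hR1 : μ[fun ω => (Y' ω - mbar ω) * (Y' ω - a ω) | mX] =ᵐ[μ]
        μ[fun ω => Y' ω ^ 2 - (mbar ω + a ω) * Y' ω | mX]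
          + μ[fun ω => mbar ω * a ω | mX] := by
      rw [he']; exact condExp_add (hY'sq.sub hco1) hco2 mX
    have hR2 : μ[fun ω => Y' ω ^ 2 - (mbar ω + a ω) * Y' ω | mX] =ᵐ[μ]
        μ[fun ω => Y' ω ^ 2 | mX] - μ[fun ω => (mbar ω + a ω) * Y' ω | mX] :=
      condExp_sub hY'sq hco1 mX
    have hR3 : μ[fun ω => (mbar ω + a ω) * Y' ω | mX] =ᵐ[μ]
        (fun ω => mbar ω + a ω) * μ[Y' | mX] :=
      condExp_mul_of_stronglyMeasurable_left ((hmbar.add ham).stronglyMeasurable) hco1 hY'int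
    have hR4 : μ[fun ω => mbar ω * a ω | mX] = fun ω => mbar ω * a ω :=
      condExp_of_stronglyMeasurable hmX ((hmbar.mul ham).stronglyMeasurable) hco2
    filter_upwards [hL1, hL2, hL3, hL4, hR1, hR2, hR3, hK1, hK2, hKR] with ω
      l1 l2 l3 l4 r1 r2 r3 k1 k2 kR
    rw [l1]
    simp only [Pi.add_apply, Pi.sub_apply, Pi.mul_apply] at *
    rw [l2, l3, l4, r1, r2, r3, hR4, k1, k2, kR]
    ring
  -- conditional expectation of R' times (Y' - mbar)
  have hlin : μ[fun ω => R' ω * (Y' ω - mbar ω) | mX] =ᵐ[μ]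
      fun ω => πX ω * (μ[fun ω' => Y' ω' - mbar ω' | mX]) ω := by
    have hDint : Integrable (fun ω => Y' ω - mbar ω) μ := hY'int.sub hmbarint
    have hRD : Integrable (fun ω => R' ω * (Y' ω - mbar ω)) μ := hRmul hDint
    have ht2 : Integrable (fun ω => mbar ω * R' ω) μ := by
      refine Integrable.mono' hmbarint.abs (hmbar2.aestronglyMeasurable.mul hR'asm) ?_
      refine Filter.Eventually.of_forall fun ω => ?_
      rcases hR'01 ω with h | h
      · simp only [h, mul_zero, norm_zero]; exact abs_nonneg _
      · simp only [h, mul_one, Real.norm_eq_abs]; exact le_rfl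
    have hRY'int : Integrable (fun ω => R' ω * Y' ω) μ := hRmul hY'int
    have he : (fun ω => R' ω * (Y' ω - mbar ω)) = fun ω => R' ω * Y' ω - mbar ω * R' ω := by
      funext ω; ring
    have hL1 : μ[fun ω => R' ω * (Y' ω - mbar ω) | mX] =ᵐ[μ]
        μ[fun ω => R' ω * Y' ω | mX] - μ[fun ω => mbar ω * R' ω | mX] := by
      rw [he]; exact condExp_sub hRY'int ht2 mX
    have hL2 : μ[fun ω => mbar ω * R' ω | mX] =ᵐ[μ] mbar * μ[R' | mX] :=
      condExp_mul_of_stronglyMeasurable_left hmbar.stronglyMeasurable ht2 hR'int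
    have hR1 : μ[fun ω' => Y' ω' - mbar ω' | mX] =ᵐ[μ] μ[Y' | mX] - μ[mbar | mX] :=
      condExp_sub hY'int hmbarint mX
    have hR2 : μ[mbar | mX] = mbar :=
      condExp_of_stronglyMeasurable hmX hmbar.stronglyMeasurable hmbarint
    filter_upwards [hL1, hL2, hR1, hK1, hKR] with ω l1 l2 r1 k1 kR
    rw [l1]
    simp only [Pi.sub_apply, Pi.mul_apply] at *
    rw [l2, r1, hR2, k1, kR]
    ring
  -- the "pull-out" identity at the level of integrals
  have hpull : ∀ (h W : Ω → ℝ), Measurable[mX] h → Integrable W μ →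
      Integrable (fun ω => h ω * W ω) μ →
      ∫ ω, h ω * W ω ∂μ = ∫ ω, h ω * (μ[W | mX]) ω ∂μ := by
    intro h W hh hW hhW
    have h1 : μ[fun ω => h ω * W ω | mX] =ᵐ[μ] fun ω => h ω * (μ[W | mX]) ω :=
      condExp_mul_of_stronglyMeasurable_left hh.stronglyMeasurable hhW hW
    calc ∫ ω, h ω * W ω ∂μ
        = ∫ ω, (μ[fun ω' => h ω' * W ω' | mX]) ω ∂μ := (integral_condExp hmX).symm
      _ = ∫ ω, h ω * (μ[W | mX]) ω ∂μ := integral_congr_ae h1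

  -- basic L² facts for the derived functions
  have hZ2 : MemLp (fun ω => Y' ω - c) 2 μ := hY2'.sub (memLp_const c)
  have hD2 : MemLp (fun ω => Y' ω - mbar ω) 2 μ := hY2'.sub hmbar2
  have hDint : Integrable (fun ω => Y' ω - mbar ω) μ := hD2.integrable one_le_two
  have hZint : Integrable (fun ω => Y' ω - c) μ := hZ2.integrable one_le_two
  have hψeq : (fun ω => mbar ω + (R ω / πX ω) * (Y ω - mbar ω) - c) =ᵐ[μ]
      fun ω => (Y' ω - c) + (R' ω / πX ω - 1) * (Y' ω - mbar ω) := by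
    filter_upwards [hYY', hRR'] with ω h1 h2
    rw [h1, h2]; ring
  have hψ2' : MemLp (fun ω => (Y' ω - c) + (R' ω / πX ω - 1) * (Y' ω - mbar ω)) 2 μ :=
    hψ2.ae_eq hψeq
  have hU2 : MemLp (fun ω => (R' ω / πX ω - 1) * (Y' ω - mbar ω)) 2 μ := by
    refine (hψ2'.sub hZ2).ae_eq (Filter.Eventually.of_forall fun ω => ?_)
    simp only [Pi.sub_apply]
    ring
  have hUint : Integrable (fun ω => (R' ω / πX ω - 1) * (Y' ω - mbar ω)) μ :=
    hU2.integrable one_le_two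
  have hRDint : Integrable (fun ω => R' ω * (Y' ω - mbar ω)) μ := hRmul hDint
  have hπinv : Measurable[mX] (fun ω => (πX ω)⁻¹) := hπX.inv
  -- ∫ U = 0
  have hUzero : ∫ ω, (R' ω / πX ω - 1) * (Y' ω - mbar ω) ∂μ = 0 := by
    have heU : ∀ ω, (R' ω / πX ω - 1) * (Y' ω - mbar ω)
        = (πX ω)⁻¹ * (R' ω * (Y' ω - mbar ω)) - (Y' ω - mbar ω) := by
      intro ω; field_simp
    have hinvint : Integrable (fun ω => (πX ω)⁻¹ * (R' ω * (Y' ω - mbar ω))) μ := by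
      have : (fun ω => (πX ω)⁻¹ * (R' ω * (Y' ω - mbar ω)))
          = fun ω => (R' ω / πX ω - 1) * (Y' ω - mbar ω) + (Y' ω - mbar ω) := by
        funext ω; rw [heU ω]; ring
      rw [this]; exact hUint.add hDint
    have h1 : ∫ ω, (πX ω)⁻¹ * (R' ω * (Y' ω - mbar ω)) ∂μ
        = ∫ ω, (πX ω)⁻¹ * (μ[fun ω' => R' ω' * (Y' ω' - mbar ω') | mX]) ω ∂μ :=
      hpull _ _ hπinv hRDint hinvint
    have h2 : ∫ ω, (πX ω)⁻¹ * (μ[fun ω' => R' ω' * (Y' ω' - mbar ω') | mX]) ω ∂μ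
        = ∫ ω, (μ[fun ω' => Y' ω' - mbar ω' | mX]) ω ∂μ := by
      refine integral_congr_ae ?_
      filter_upwards [hlin, hπpos] with ω hω hπω
      rw [hω]
      field_simp
    have h3 : ∫ ω, (μ[fun ω' => Y' ω' - mbar ω' | mX]) ω ∂μ = ∫ ω, (Y' ω - mbar ω) ∂μ :=
      integral_condExp hmX
    calc ∫ ω, (R' ω / πX ω - 1) * (Y' ω - mbar ω) ∂μ
        = ∫ ω, ((πX ω)⁻¹ * (R' ω * (Y' ω - mbar ω)) - (Y' ω - mbar ω)) ∂μ := by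
          exact integral_congr_ae (Filter.Eventually.of_forall fun ω => heU ω)
      _ = (∫ ω, (πX ω)⁻¹ * (R' ω * (Y' ω - mbar ω)) ∂μ) - ∫ ω, (Y' ω - mbar ω) ∂μ :=
          integral_sub hinvint hDint
      _ = 0 := by rw [h1, h2, h3]; ring
  -- ∫ Z·U = 0
  have hZU : Integrable (fun ω => (Y' ω - c) * ((R' ω / πX ω - 1) * (Y' ω - mbar ω))) μ :=
    integrable_mul_of_memL2 hZ2 hU2
  have hDZint : Integrable (fun ω => (Y' ω - mbar ω) * (Y' ω - c)) μ :=
    integrable_mul_of_memL2 hD2 hZ2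
  have hRDZint : Integrable (fun ω => R' ω * ((Y' ω - mbar ω) * (Y' ω - c))) μ :=
    hRmul hDZint
  have hquadc := hquad (fun _ => c) (measurable_const : Measurable[mX] (fun _ : Ω => c))
    (memLp_const c)
  have hZUzero : ∫ ω, (Y' ω - c) * ((R' ω / πX ω - 1) * (Y' ω - mbar ω)) ∂μ = 0 := by
    have heZU : ∀ ω, (Y' ω - c) * ((R' ω / πX ω - 1) * (Y' ω - mbar ω))
        = (πX ω)⁻¹ * (R' ω * ((Y' ω - mbar ω) * (Y' ω - c)))
          - (Y' ω - mbar ω) * (Y' ω - c) := by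
      intro ω; field_simp
    have hinvint : Integrable (fun ω => (πX ω)⁻¹ * (R' ω * ((Y' ω - mbar ω) * (Y' ω - c)))) μ := by
      have : (fun ω => (πX ω)⁻¹ * (R' ω * ((Y' ω - mbar ω) * (Y' ω - c))))
          = fun ω => (Y' ω - c) * ((R' ω / πX ω - 1) * (Y' ω - mbar ω))
            + (Y' ω - mbar ω) * (Y' ω - c) := by
        funext ω; rw [heZU ω]; ring
      rw [this]; exact hZU.add hDZint
    have h1 : ∫ ω, (πX ω)⁻¹ * (R' ω * ((Y' ω - mbar ω) * (Y' ω - c))) ∂μ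
        = ∫ ω, (πX ω)⁻¹ * (μ[fun ω' => R' ω' * ((Y' ω' - mbar ω') * (Y' ω' - c)) | mX]) ω ∂μ :=
      hpull _ _ hπinv hRDZint hinvint
    have h2 : ∫ ω, (πX ω)⁻¹ * (μ[fun ω' => R' ω' * ((Y' ω' - mbar ω') * (Y' ω' - c)) | mX]) ω ∂μ
        = ∫ ω, (μ[fun ω' => (Y' ω' - mbar ω') * (Y' ω' - c) | mX]) ω ∂μ := by
      refine integral_congr_ae ?_
      filter_upwards [hquadc, hπpos] with ω hω hπω
      rw [hω]
      field_simp
    have h3 : ∫ ω, (μ[fun ω' => (Y' ω' - mbar ω') * (Y' ω' - c) | mX]) ω ∂μ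
        = ∫ ω, (Y' ω - mbar ω) * (Y' ω - c) ∂μ := integral_condExp hmX
    calc ∫ ω, (Y' ω - c) * ((R' ω / πX ω - 1) * (Y' ω - mbar ω)) ∂μ
        = ∫ ω, ((πX ω)⁻¹ * (R' ω * ((Y' ω - mbar ω) * (Y' ω - c)))
            - (Y' ω - mbar ω) * (Y' ω - c)) ∂μ :=
          integral_congr_ae (Filter.Eventually.of_forall fun ω => heZU ω)
      _ = (∫ ω, (πX ω)⁻¹ * (R' ω * ((Y' ω - mbar ω) * (Y' ω - c))) ∂μ)
            - ∫ ω, (Y' ω - mbar ω) * (Y' ω - c) ∂μ := integral_sub hinvint hDZint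
      _ = 0 := by rw [h1, h2, h3]; ring
  -- ∫ U² = weighted term
  have hDsq_cond : μ[fun ω' => (Y ω' - mbar ω') ^ 2 | mX]
      =ᵐ[μ] μ[fun ω' => (Y' ω' - mbar ω') ^ 2 | mX] :=
    condExp_congr_ae (by filter_upwards [hYY'] with ω h; rw [h])
  have hwint' : Integrable (fun ω =>
      ((1 - πX ω) / πX ω) * (μ[fun ω' => (Y' ω' - mbar ω') ^ 2 | mX]) ω) μ := by
    refine hwint.congr ?_
    filter_upwards [hDsq_cond] with ω h
    rw [h]
  have hDsqint : Integrable (fun ω => (Y' ω - mbar ω) ^ 2) μ := hD2.integrable_sq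
  have hRDsqint : Integrable (fun ω => R' ω * (Y' ω - mbar ω) ^ 2) μ := hRmul hDsqint
  have hUsqint : Integrable (fun ω => ((R' ω / πX ω - 1) * (Y' ω - mbar ω)) ^ 2) μ :=
    hU2.integrable_sq
  have hquadm := hquad mbar hmbar hmbar2
  have hquadm' : μ[fun ω => R' ω * (Y' ω - mbar ω) ^ 2 | mX] =ᵐ[μ]
      fun ω => πX ω * (μ[fun ω' => (Y' ω' - mbar ω') ^ 2 | mX]) ω := by
    have e1 : (fun ω => R' ω * (Y' ω - mbar ω) ^ 2)
        = fun ω => R' ω * ((Y' ω - mbar ω) * (Y' ω - mbar ω)) := by funext ω; ring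
    have e2 : (fun ω' => (Y' ω' - mbar ω') ^ 2)
        = fun ω' => (Y' ω' - mbar ω') * (Y' ω' - mbar ω') := by funext ω; ring
    rw [e1, e2]
    exact hquadm
  have hwm : Measurable[mX] (fun ω => (1 - 2 * πX ω) / (πX ω) ^ 2) :=
    Measurable.div ((measurable_const : Measurable[mX] (fun _ : Ω => (1 : ℝ))).sub
      (hπX.const_mul 2)) (hπX.pow_const 2)
  have hUsq_eq : ∀ ω, ((R' ω / πX ω - 1) * (Y' ω - mbar ω)) ^ 2
      = ((1 - 2 * πX ω) / (πX ω) ^ 2) * (R' ω * (Y' ω - mbar ω) ^ 2)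
        + (Y' ω - mbar ω) ^ 2 := by
    intro ω
    rcases hR'01 ω with h | h
    · simp only [h, zero_div, zero_sub, mul_zero]
      ring
    · by_cases hπ0 : πX ω = 0
      · rw [h, hπ0]
        have h2 : ((0 : ℝ)) ^ 2 = 0 := by norm_num
        rw [h2, div_zero, div_zero]
        ring
      · rw [h]
        field_simp
        ring
  have hwRDsq : Integrable (fun ω =>
      ((1 - 2 * πX ω) / (πX ω) ^ 2) * (R' ω * (Y' ω - mbar ω) ^ 2)) μ := by
    have : (fun ω => ((1 - 2 * πX ω) / (πX ω) ^ 2) * (R' ω * (Y' ω - mbar ω) ^ 2))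
        = fun ω => ((R' ω / πX ω - 1) * (Y' ω - mbar ω)) ^ 2 - (Y' ω - mbar ω) ^ 2 := by
      funext ω; rw [hUsq_eq ω]; ring
    rw [this]; exact hUsqint.sub hDsqint
  have hEcond_int : Integrable (μ[fun ω' => (Y' ω' - mbar ω') ^ 2 | mX]) μ := integrable_condExp
  have hUsq_val : ∫ ω, ((R' ω / πX ω - 1) * (Y' ω - mbar ω)) ^ 2 ∂μ
      = ∫ ω, ((1 - πX ω) / πX ω) * (μ[fun ω' => (Y' ω' - mbar ω') ^ 2 | mX]) ω ∂μ := by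
    have h1 : ∫ ω, ((1 - 2 * πX ω) / (πX ω) ^ 2) * (R' ω * (Y' ω - mbar ω) ^ 2) ∂μ
        = ∫ ω, ((1 - 2 * πX ω) / (πX ω) ^ 2)
            * (μ[fun ω' => R' ω' * (Y' ω' - mbar ω') ^ 2 | mX]) ω ∂μ :=
      hpull _ _ hwm hRDsqint hwRDsq
    have h2 : ∫ ω, ((1 - 2 * πX ω) / (πX ω) ^ 2)
          * (μ[fun ω' => R' ω' * (Y' ω' - mbar ω') ^ 2 | mX]) ω ∂μ
        = ∫ ω, (((1 - πX ω) / πX ω) * (μ[fun ω' => (Y' ω' - mbar ω') ^ 2 | mX]) ω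
            - (μ[fun ω' => (Y' ω' - mbar ω') ^ 2 | mX]) ω) ∂μ := by
      refine integral_congr_ae ?_
      filter_upwards [hquadm', hπpos] with ω hω hπω
      rw [hω]
      field_simp
      ring
    have h3 : ∫ ω, (((1 - πX ω) / πX ω) * (μ[fun ω' => (Y' ω' - mbar ω') ^ 2 | mX]) ω
          - (μ[fun ω' => (Y' ω' - mbar ω') ^ 2 | mX]) ω) ∂μ
        = (∫ ω, ((1 - πX ω) / πX ω) * (μ[fun ω' => (Y' ω' - mbar ω') ^ 2 | mX]) ω ∂μ)
          - ∫ ω, (μ[fun ω' => (Y' ω' - mbar ω') ^ 2 | mX]) ω ∂μ :=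
      integral_sub hwint' hEcond_int
    have h4 : ∫ ω, (μ[fun ω' => (Y' ω' - mbar ω') ^ 2 | mX]) ω ∂μ
        = ∫ ω, (Y' ω - mbar ω) ^ 2 ∂μ := integral_condExp hmX
    calc ∫ ω, ((R' ω / πX ω - 1) * (Y' ω - mbar ω)) ^ 2 ∂μ
        = ∫ ω, (((1 - 2 * πX ω) / (πX ω) ^ 2) * (R' ω * (Y' ω - mbar ω) ^ 2)
            + (Y' ω - mbar ω) ^ 2) ∂μ :=
          integral_congr_ae (Filter.Eventually.of_forall fun ω => hUsq_eq ω)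
      _ = (∫ ω, ((1 - 2 * πX ω) / (πX ω) ^ 2) * (R' ω * (Y' ω - mbar ω) ^ 2) ∂μ)
            + ∫ ω, (Y' ω - mbar ω) ^ 2 ∂μ := integral_add hwRDsq hDsqint
      _ = ∫ ω, ((1 - πX ω) / πX ω) * (μ[fun ω' => (Y' ω' - mbar ω') ^ 2 | mX]) ω ∂μ := by
          rw [h1, h2, h3, h4]; ring
  -- mean of ψ is zero
  have hZmean : ∫ ω, (Y' ω - c) ∂μ = 0 := by
    rw [integral_sub hY'int (integrable_const c)]
    have : ∫ ω, Y' ω ∂μ = c := by rw [hc]; exact (integral_congr_ae hYY').symm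
    simp [this]
  have hψmean : ∫ ω, (mbar ω + (R ω / πX ω) * (Y ω - mbar ω) - c) ∂μ = 0 := by
    rw [integral_congr_ae hψeq]
    rw [integral_add hZint hUint]
    rw [hZmean, hUzero]
    ring
  -- variance computations
  have hvarψ : variance (fun ω => mbar ω + (R ω / πX ω) * (Y ω - mbar ω) - c) μ
      = ∫ ω, ((Y' ω - c) + (R' ω / πX ω - 1) * (Y' ω - mbar ω)) ^ 2 ∂μ := by
    rw [variance_eq_integral hψ2.aemeasurable]
    refine integral_congr_ae ?_
    filter_upwards [hψeq] with ω hω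
    rw [hψmean, hω]
    ring
  have hZsqint : Integrable (fun ω => (Y' ω - c) ^ 2) μ := hZ2.integrable_sq
  have hvarY : variance Y μ = ∫ ω, (Y' ω - c) ^ 2 ∂μ := by
    rw [variance_eq_integral hY2.aemeasurable]
    refine integral_congr_ae ?_
    filter_upwards [hYY'] with ω hω
    rw [hω, ← hc]
  have hsq_expand : ∫ ω, ((Y' ω - c) + (R' ω / πX ω - 1) * (Y' ω - mbar ω)) ^ 2 ∂μ
      = (∫ ω, (Y' ω - c) ^ 2 ∂μ)
        + (2 * ∫ ω, (Y' ω - c) * ((R' ω / πX ω - 1) * (Y' ω - mbar ω)) ∂μ)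
        + ∫ ω, ((R' ω / πX ω - 1) * (Y' ω - mbar ω)) ^ 2 ∂μ := by
    have he : ∀ ω, ((Y' ω - c) + (R' ω / πX ω - 1) * (Y' ω - mbar ω)) ^ 2
        = ((Y' ω - c) ^ 2 + 2 * ((Y' ω - c) * ((R' ω / πX ω - 1) * (Y' ω - mbar ω))))
          + ((R' ω / πX ω - 1) * (Y' ω - mbar ω)) ^ 2 := by
      intro ω; ring
    have e1 : ∫ ω, (((Y' ω - c) ^ 2 + 2 * ((Y' ω - c) * ((R' ω / πX ω - 1) * (Y' ω - mbar ω))))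
          + ((R' ω / πX ω - 1) * (Y' ω - mbar ω)) ^ 2) ∂μ
        = (∫ ω, ((Y' ω - c) ^ 2 + 2 * ((Y' ω - c) * ((R' ω / πX ω - 1) * (Y' ω - mbar ω)))) ∂μ)
          + ∫ ω, ((R' ω / πX ω - 1) * (Y' ω - mbar ω)) ^ 2 ∂μ :=
      integral_add (hZsqint.add (hZU.const_mul 2)) hUsqint
    have e2 : ∫ ω, ((Y' ω - c) ^ 2 + 2 * ((Y' ω - c) * ((R' ω / πX ω - 1) * (Y' ω - mbar ω)))) ∂μ
        = (∫ ω, (Y' ω - c) ^ 2 ∂μ)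
          + ∫ ω, 2 * ((Y' ω - c) * ((R' ω / πX ω - 1) * (Y' ω - mbar ω))) ∂μ :=
      integral_add hZsqint (hZU.const_mul 2)
    have e3 : ∫ ω, 2 * ((Y' ω - c) * ((R' ω / πX ω - 1) * (Y' ω - mbar ω))) ∂μ
        = 2 * ∫ ω, (Y' ω - c) * ((R' ω / πX ω - 1) * (Y' ω - mbar ω)) ∂μ :=
      integral_const_mul 2 _
    rw [integral_congr_ae (Filter.Eventually.of_forall he), e1, e2, e3]
  calc variance (fun ω => mbar ω + (R ω / πX ω) * (Y ω - mbar ω) - c) μ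
      = ∫ ω, ((Y' ω - c) + (R' ω / πX ω - 1) * (Y' ω - mbar ω)) ^ 2 ∂μ := hvarψ
    _ = (∫ ω, (Y' ω - c) ^ 2 ∂μ)
        + (2 * ∫ ω, (Y' ω - c) * ((R' ω / πX ω - 1) * (Y' ω - mbar ω)) ∂μ)
        + ∫ ω, ((R' ω / πX ω - 1) * (Y' ω - mbar ω)) ^ 2 ∂μ := hsq_expand
    _ = (∫ ω, (Y' ω - c) ^ 2 ∂μ)
        + ∫ ω, ((1 - πX ω) / πX ω) * (μ[fun ω' => (Y' ω' - mbar ω') ^ 2 | mX]) ω ∂μ := by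
        rw [hZUzero, hUsq_val]; ring
    _ = (∫ ω, ((1 - πX ω) / πX ω) * (μ[fun ω' => (Y ω' - mbar ω') ^ 2 | mX]) ω ∂μ)
        + variance Y μ := by
        rw [hvarY]
        have : ∫ ω, ((1 - πX ω) / πX ω) * (μ[fun ω' => (Y ω' - mbar ω') ^ 2 | mX]) ω ∂μ
            = ∫ ω, ((1 - πX ω) / πX ω) * (μ[fun ω' => (Y' ω' - mbar ω') ^ 2 | mX]) ω ∂μ := by
          refine integral_congr_ae ?_
          filter_upwards [hDsq_cond] with ω h
          rw [h]
        rw [this]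
        ring

/-- Variance decomposition of the AIPW influence function
`ψ = μ̄(X) + (R/π(X))(Y − μ̄(X)) − E[Y]` under MAR with true propensity `π`:
`Var(ψ) = E[((1 − π(X))/π(X))·E[(Y − μ̄(X))² | X]] + Var(Y)`. -/
theorem aipw_variance_decomposition
    {Ω : Type*} {mΩ : MeasurableSpace Ω} [StandardBorelSpace Ω]
    {μ : Measure Ω} [IsProbabilityMeasure μ]
    (mX : MeasurableSpace Ω) (hmX : mX ≤ mΩ)
    (R Y : Ω → ℝ)
    (hR01 : ∀ ω, R ω = 0 ∨ R ω = 1)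
    -- MAR: R ⊥ Y | X, where mX = σ(X)
    (hMAR : CondIndepFun mX hmX R Y μ)
    (πX : Ω → ℝ)
    (hπX : Measurable[mX] πX)
    (hπ : πX =ᵐ[μ] μ[R | mX])
    (hπpos : ∀ᵐ ω ∂μ, 0 < πX ω)
    (mbar : Ω → ℝ) (hmbar : Measurable[mX] mbar)
    (hY2 : MemLp Y 2 μ) (hmbar2 : MemLp mbar 2 μ)
    (hψ2 : MemLp (fun ω =>
        mbar ω + (R ω / πX ω) * (Y ω - mbar ω) - ∫ ω', Y ω' ∂μ) 2 μ)
    (hwint : Integrable (fun ω =>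
        ((1 - πX ω) / πX ω) * (μ[fun ω' => (Y ω' - mbar ω') ^ 2 | mX]) ω) μ) :
    variance (fun ω =>
        mbar ω + (R ω / πX ω) * (Y ω - mbar ω) - ∫ ω', Y ω' ∂μ) μ =
      (∫ ω, ((1 - πX ω) / πX ω) *
          (μ[fun ω' => (Y ω' - mbar ω') ^ 2 | mX]) ω ∂μ) + variance Y μ :=
  aipw_aux hmX R Y hR01 hMAR πX hπX hπ hπpos mbar hmbar hY2 hmbar2 hψ2 hwint
end

section
/- Suppose R ⊥ Y | X and E[R|X] = π(X) > 0 a.s., with μ*(X) = E[Y|X] and μ̄ any measurable function of X (suitably integrable). Then E[ ((R − π(X))/π(X)) · (Y − μ̄(X)) | X ] = 0 if μ̄ = μ* OR the weighting function used in place of π equals the true π; more precisely, for any measurable w(X) ∈ (0,1], E[ ((R − w(X))/w(X))·(Y − μ̄(X)) ] = E[ ((π(X) − w(X))/w(X))·(μ*(X) − μ̄(X)) ], which vanishes whenever w = π or μ̄ = μ*. -/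
open MeasureTheory ProbabilityTheory Filter Set Topology

section AuxLemmas

variable {Ω : Type*} {m : MeasurableSpace Ω} {mΩ : MeasurableSpace Ω} [StandardBorelSpace Ω]
  {μ : Measure Ω} [IsProbabilityMeasure μ]

lemma condexpKernel_null_aux (hm : m ≤ mΩ) {N : Set Ω} (hN : MeasurableSet N) (hμN : μ N = 0) :
    ∀ᵐ a ∂(μ.trim hm), condExpKernel μ m a N = 0 := by
  have h1 : (μ⟦N | m⟧) =ᵐ[μ] 0 := by
    have h0 : (Set.indicator N fun _ => (1:ℝ)) =ᵐ[μ] 0 := by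
      have : ∀ᵐ ω ∂μ, ω ∉ N := by
        rw [ae_iff]; simpa using hμN
      filter_upwards [this] with ω hω
      simp [Set.indicator_of_notMem hω]
    exact (condExp_congr_ae h0).trans (by rw [condExp_zero])
  have h2 : ∀ᵐ ω ∂μ, condExpKernel μ m ω N = 0 := by
    filter_upwards [(condExpKernel_ae_eq_condExp hm hN).trans h1] with ω hω
    have hfin := measure_ne_top (condExpKernel μ m ω) N
    simp only [Pi.zero_apply, measureReal_def, ENNReal.toReal_eq_zero_iff] at hω
    tauto
  have hmeas : MeasurableSet[m] {ω | ¬ condExpKernel μ m ω N = 0} := by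
    have h := measurable_condExpKernel (μ := μ) (m := m) hN
    exact (h (measurableSet_singleton 0)).compl
  rw [ae_iff, trim_measurableSet_eq hm hmeas]
  rw [ae_iff] at h2
  exact h2

lemma condIndepFun_congr_ae_aux (hm : m ≤ mΩ) {R Y R' Y' : Ω → ℝ}
    (hCI : CondIndepFun m hm R Y μ) (hR : R =ᵐ[μ] R') (hY : Y =ᵐ[μ] Y') :
    CondIndepFun m hm R' Y' μ := by
  obtain ⟨N₁, hsub₁, hm₁, h0₁⟩ := exists_measurable_superset_of_null (ae_iff.mp hR)
  obtain ⟨N₂, hsub₂, hm₂, h0₂⟩ := exists_measurable_superset_of_null (ae_iff.mp hY)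
  have h1 := condexpKernel_null_aux hm hm₁ h0₁
  have h2 := condexpKernel_null_aux hm hm₂ h0₂
  refine Kernel.IndepFun.congr' hCI ?_ ?_
  · filter_upwards [h1] with a ha
    exact ae_iff.mpr (measure_mono_null hsub₁ ha)
  · filter_upwards [h2] with a ha
    exact ae_iff.mpr (measure_mono_null hsub₂ ha)

lemma condexp_indicator_mul_of_condIndepFun (hm : m ≤ mΩ)
    {A : Set Ω} (hA : MeasurableSet A) {Y : Ω → ℝ} (hYm : Measurable Y)
    (hYi : Integrable Y μ)
    (hCI : CondIndepFun m hm (A.indicator fun _ => (1:ℝ)) Y μ) :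
    (μ[fun ω => A.indicator (fun _ => (1:ℝ)) ω * Y ω | m]) =ᵐ[μ]
      fun ω => (μ⟦A | m⟧) ω * (μ[Y | m]) ω := by
  set R : Ω → ℝ := A.indicator fun _ => (1:ℝ) with hR_def
  set P : Ω → ℝ := μ⟦A | m⟧ with hP_def
  have hRm : Measurable R := measurable_const.indicator hA
  have hRbd : ∀ ω, ‖R ω‖ ≤ 1 := by
    intro ω
    by_cases h : ω ∈ A <;> simp [hR_def, Set.indicator, h]
  have hRin : Integrable R μ :=
    (integrable_const (1:ℝ)).mono' hRm.aestronglyMeasurable (Eventually.of_forall hRbd)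
  have hPbd : ∀ᵐ ω ∂μ, ‖P ω‖ ≤ 1 := by
    have h0 : 0 ≤ᵐ[μ] P :=
      condExp_nonneg (Eventually.of_forall fun ω => Set.indicator_nonneg (fun _ _ => zero_le_one) ω)
    have h1 : P ≤ᵐ[μ] μ[(fun _ => (1:ℝ)) | m] :=
      condExp_mono hRin (integrable_const 1)
        (Eventually.of_forall fun ω => by
          by_cases h : ω ∈ A <;> simp [hR_def, Set.indicator, h])
    rw [condExp_const hm] at h1
    filter_upwards [h0, h1] with ω hω0 hω1
    rw [Real.norm_eq_abs, abs_of_nonneg hω0]; exact hω1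
  -- key indicator identity
  have key : ∀ s, MeasurableSet[m] s → ∀ t : Set ℝ, MeasurableSet t →
      ∫ ω in s, R ω * (Y ⁻¹' t).indicator (fun _ => (1:ℝ)) ω ∂μ
        = ∫ ω in s, P ω * (Y ⁻¹' t).indicator (fun _ => (1:ℝ)) ω ∂μ := by
    intro s hs t ht
    set B : Set Ω := Y ⁻¹' t with hB_def
    have hBmeas : MeasurableSet B := hYm ht
    have hpre : R ⁻¹' {1} = A := by
      ext ω
      by_cases h : ω ∈ A <;> simp [hR_def, Set.indicator, h]
    have hmul := (condIndepFun_iff_condExp_inter_preimage_eq_mul hRm hYm).mp hCI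
      {1} t (measurableSet_singleton 1) ht
    rw [hpre] at hmul
    have h_eq : ∀ ω, R ω * B.indicator (fun _ => (1:ℝ)) ω
        = (A ∩ B).indicator (fun _ => (1:ℝ)) ω := by
      intro ω
      by_cases h1 : ω ∈ A <;> by_cases h2 : ω ∈ B <;>
        simp [hR_def, Set.indicator, h1, h2, Set.mem_inter_iff]
    have hIndAB : Integrable ((A ∩ B).indicator fun _ => (1:ℝ)) μ :=
      (integrable_const (1:ℝ)).indicator (hA.inter hBmeas)
    have hIndB : Integrable (B.indicator fun _ => (1:ℝ)) μ :=
      (integrable_const (1:ℝ)).indicator hBmeas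
    have hpull : (μ[P * B.indicator (fun _ => (1:ℝ)) | m]) =ᵐ[μ]
        P * μ[B.indicator (fun _ => (1:ℝ)) | m] :=
      condExp_stronglyMeasurable_mul_of_bound hm stronglyMeasurable_condExp hIndB 1 hPbd
    have hPBint : Integrable (P * B.indicator fun _ => (1:ℝ)) μ :=
      hIndB.bdd_mul (stronglyMeasurable_condExp.mono hm).aestronglyMeasurable hPbd
    calc ∫ ω in s, R ω * B.indicator (fun _ => (1:ℝ)) ω ∂μ
        = ∫ ω in s, (A ∩ B).indicator (fun _ => (1:ℝ)) ω ∂μ := by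
          exact integral_congr_ae (Eventually.of_forall fun ω => h_eq ω)
      _ = ∫ ω in s, (μ⟦A ∩ B | m⟧) ω ∂μ := (setIntegral_condExp hm hIndAB hs).symm
      _ = ∫ ω in s, ((μ⟦A | m⟧) ω) * ((μ⟦B | m⟧) ω) ∂μ := by
          refine integral_congr_ae (ae_restrict_of_ae ?_)
          filter_upwards [hmul] with ω hω using hω
      _ = ∫ ω in s, (μ[P * B.indicator (fun _ => (1:ℝ)) | m]) ω ∂μ := by
          refine integral_congr_ae (ae_restrict_of_ae ?_)
          filter_upwards [hpull] with ω hω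
          rw [hω]; rfl
      _ = ∫ ω in s, (P * B.indicator (fun _ => (1:ℝ))) ω ∂μ :=
          setIntegral_condExp hm hPBint hs
      _ = ∫ ω in s, P ω * B.indicator (fun _ => (1:ℝ)) ω ∂μ := rfl
  -- simple function step
  have keySimple : ∀ s, MeasurableSet[m] s → ∀ φ : SimpleFunc ℝ ℝ,
      ∫ ω in s, R ω * φ (Y ω) ∂μ = ∫ ω in s, P ω * φ (Y ω) ∂μ := by
    intro s hs φ
    haveI : IsFiniteMeasure (μ.restrict s) := inferInstance
    induction φ using SimpleFunc.induction with
    | @const c t ht =>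
      have hconv : ∀ Z : Ω → ℝ,
          ∫ ω in s, Z ω * (SimpleFunc.piecewise t ht (SimpleFunc.const ℝ c)
              (SimpleFunc.const ℝ 0)) (Y ω) ∂μ
            = c * ∫ ω in s, Z ω * (Y ⁻¹' t).indicator (fun _ => (1:ℝ)) ω ∂μ := by
        intro Z
        rw [← integral_const_mul]
        refine integral_congr_ae (Eventually.of_forall fun ω => ?_)
        by_cases h : Y ω ∈ t
        · simp only [SimpleFunc.piecewise_apply, SimpleFunc.coe_const,
            Function.const_apply, h, if_pos,
            Set.indicator_of_mem (show ω ∈ Y ⁻¹' t from h)]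
          ring
        · simp only [SimpleFunc.piecewise_apply, SimpleFunc.coe_const,
            Function.const_apply, h, if_neg, if_false,
            Set.indicator_of_notMem (show ω ∉ Y ⁻¹' t from h)]
          ring
      rw [hconv R, hconv P, key s hs t ht]
    | @add f g hdisj hf hg =>
      have hbf := f.exists_forall_norm_le
      have hbg := g.exists_forall_norm_le
      obtain ⟨Cf, hCf⟩ := hbf
      obtain ⟨Cg, hCg⟩ := hbg
      have hintR : ∀ (ψ : SimpleFunc ℝ ℝ) (C : ℝ), (∀ x, ‖ψ x‖ ≤ C) →
          Integrable (fun ω => R ω * ψ (Y ω)) (μ.restrict s) := by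
        intro ψ C hC
        refine (integrable_const C).mono' ?_ ?_
        · exact (hRm.mul (ψ.measurable.comp hYm)).aestronglyMeasurable
        · refine Eventually.of_forall fun ω => ?_
          calc ‖R ω * ψ (Y ω)‖ = ‖R ω‖ * ‖ψ (Y ω)‖ := norm_mul _ _
            _ ≤ 1 * C := by
                refine mul_le_mul (hRbd ω) (hC _) (norm_nonneg _) zero_le_one
            _ = C := one_mul C
      have hintP : ∀ (ψ : SimpleFunc ℝ ℝ) (C : ℝ), (∀ x, ‖ψ x‖ ≤ C) →
          Integrable (fun ω => P ω * ψ (Y ω)) (μ.restrict s) := by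
        intro ψ C hC
        refine (integrable_const C).mono' ?_ ?_
        · exact (stronglyMeasurable_condExp.mono hm).aestronglyMeasurable.mul
            (ψ.measurable.comp hYm).aestronglyMeasurable
        · refine ae_restrict_of_ae ?_
          filter_upwards [hPbd] with ω hω
          calc ‖P ω * ψ (Y ω)‖ = ‖P ω‖ * ‖ψ (Y ω)‖ := norm_mul _ _
            _ ≤ 1 * C := by
                refine mul_le_mul hω (hC _) (norm_nonneg _) zero_le_one
            _ = C := one_mul C
      simp only [SimpleFunc.coe_add, Pi.add_apply, mul_add]
      rw [integral_add (hintR f Cf hCf) (hintR g Cg hCg),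
        integral_add (hintP f Cf hCf) (hintP g Cg hCg), hf, hg]
  -- limit step
  have key2 : ∀ s, MeasurableSet[m] s →
      ∫ ω in s, R ω * Y ω ∂μ = ∫ ω in s, P ω * Y ω ∂μ := by
    intro s hs
    set φn : ℕ → SimpleFunc ℝ ℝ := fun n =>
      SimpleFunc.approxOn (id : ℝ → ℝ) measurable_id Set.univ 0 (Set.mem_univ 0) n with hφn
    have htend : ∀ x : ℝ, Tendsto (fun n => φn n x) atTop (𝓝 x) := by
      intro x
      simpa using SimpleFunc.tendsto_approxOn (f := (id : ℝ → ℝ)) measurable_id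
        (Set.mem_univ 0) (by simp)
    have hnorm : ∀ n x, ‖φn n x‖ ≤ ‖x‖ + ‖x‖ := by
      intro n x
      simpa using SimpleFunc.norm_approxOn_zero_le (f := (id : ℝ → ℝ)) measurable_id
        (Set.mem_univ 0) x n
    have hYs : Integrable Y (μ.restrict s) := hYi.restrict
    have hbound_int : Integrable (fun ω => ‖Y ω‖ + ‖Y ω‖) (μ.restrict s) :=
      hYs.norm.add hYs.norm
    have hlimR : Tendsto (fun n => ∫ ω in s, R ω * φn n (Y ω) ∂μ) atTop
        (𝓝 (∫ ω in s, R ω * Y ω ∂μ)) := by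
      refine tendsto_integral_of_dominated_convergence (fun ω => ‖Y ω‖ + ‖Y ω‖)
        (fun n => (hRm.mul ((φn n).measurable.comp hYm)).aestronglyMeasurable)
        hbound_int (fun n => ?_) ?_
      · refine Eventually.of_forall fun ω => ?_
        calc ‖R ω * φn n (Y ω)‖ = ‖R ω‖ * ‖φn n (Y ω)‖ := norm_mul _ _
          _ ≤ 1 * (‖Y ω‖ + ‖Y ω‖) := by
              refine mul_le_mul (hRbd ω) (hnorm n _) (norm_nonneg _) zero_le_one
          _ = ‖Y ω‖ + ‖Y ω‖ := one_mul _
      · exact Eventually.of_forall fun ω => (tendsto_const_nhds.mul (htend (Y ω)))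
    have hlimP : Tendsto (fun n => ∫ ω in s, P ω * φn n (Y ω) ∂μ) atTop
        (𝓝 (∫ ω in s, P ω * Y ω ∂μ)) := by
      refine tendsto_integral_of_dominated_convergence (fun ω => ‖Y ω‖ + ‖Y ω‖)
        (fun n => ((stronglyMeasurable_condExp.mono hm).aestronglyMeasurable.mul
          ((φn n).measurable.comp hYm).aestronglyMeasurable))
        hbound_int (fun n => ?_) ?_
      · refine ae_restrict_of_ae ?_
        filter_upwards [hPbd] with ω hω
        calc ‖P ω * φn n (Y ω)‖ = ‖P ω‖ * ‖φn n (Y ω)‖ := norm_mul _ _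
          _ ≤ 1 * (‖Y ω‖ + ‖Y ω‖) := by
              refine mul_le_mul hω (hnorm n _) (norm_nonneg _) zero_le_one
          _ = ‖Y ω‖ + ‖Y ω‖ := one_mul _
      · exact Eventually.of_forall fun ω => (tendsto_const_nhds.mul (htend (Y ω)))
    have heach : ∀ n, ∫ ω in s, R ω * φn n (Y ω) ∂μ = ∫ ω in s, P ω * φn n (Y ω) ∂μ :=
      fun n => keySimple s hs (φn n)
    exact tendsto_nhds_unique (by simpa only [heach] using hlimR) hlimP
  -- conclude via characterization of condExp
  have hRYint : Integrable (fun ω => R ω * Y ω) μ := by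
    refine hYi.mono (hRm.mul hYm).aestronglyMeasurable ?_
    refine Eventually.of_forall fun ω => ?_
    calc ‖R ω * Y ω‖ = ‖R ω‖ * ‖Y ω‖ := norm_mul _ _
      _ ≤ 1 * ‖Y ω‖ := mul_le_mul_of_nonneg_right (hRbd ω) (norm_nonneg _)
      _ = ‖Y ω‖ := one_mul _
  have hPcY_int : Integrable (fun ω => P ω * (μ[Y | m]) ω) μ :=
    integrable_condExp.bdd_mul (stronglyMeasurable_condExp.mono hm).aestronglyMeasurable hPbd
  have hPY_int : Integrable (P * Y) μ :=
    hYi.bdd_mul (stronglyMeasurable_condExp.mono hm).aestronglyMeasurable hPbd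
  have hpull2 : (μ[P * Y | m]) =ᵐ[μ] P * μ[Y | m] :=
    condExp_stronglyMeasurable_mul_of_bound hm stronglyMeasurable_condExp hYi 1 hPbd
  have hg_eq : ∀ s : Set Ω, MeasurableSet[m] s → μ s < ⊤ →
      ∫ ω in s, P ω * (μ[Y | m]) ω ∂μ = ∫ ω in s, R ω * Y ω ∂μ := by
    intro s hs _
    calc ∫ ω in s, P ω * (μ[Y | m]) ω ∂μ
        = ∫ ω in s, (μ[P * Y | m]) ω ∂μ := by
          refine integral_congr_ae (ae_restrict_of_ae ?_)
          filter_upwards [hpull2] with ω hω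
          rw [hω]; simp [Pi.mul_apply]
      _ = ∫ ω in s, (P * Y) ω ∂μ := setIntegral_condExp hm hPY_int hs
      _ = ∫ ω in s, P ω * Y ω ∂μ := rfl
      _ = ∫ ω in s, R ω * Y ω ∂μ := (key2 s hs).symm
  have hfinal := ae_eq_condExp_of_forall_setIntegral_eq hm hRYint
    (fun s _ _ => hPcY_int.integrableOn)
    hg_eq
    ((stronglyMeasurable_condExp.mul stronglyMeasurable_condExp).aestronglyMeasurable)
  exact hfinal.symm

end AuxLemmas
/-- Product-bias (double robustness) identity for the AIPW mean
functional under MAR: for any measurable weighting function `w(X) ∈ (0,1]`,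
`E[((R − w(X))/w(X))·(Y − μ̄(X))] = E[((π(X) − w(X))/w(X))·(μ*(X) − μ̄(X))]`,
which vanishes whenever `w = π` or `μ̄ = μ*`. -/
theorem aipw_product_bias_identity
    {Ω : Type*} {mΩ : MeasurableSpace Ω} [StandardBorelSpace Ω]
    {μ : Measure Ω} [IsProbabilityMeasure μ]
    (mX : MeasurableSpace Ω) (hmX : mX ≤ mΩ)
    (R Y : Ω → ℝ)
    (hR01 : ∀ ω, R ω = 0 ∨ R ω = 1)
    -- MAR: R ⊥ Y | X, where mX = σ(X)
    (hMAR : CondIndepFun mX hmX R Y μ)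
    (πX : Ω → ℝ)
    (hπX : Measurable[mX] πX)
    (hπ : πX =ᵐ[μ] μ[R | mX])
    (hπpos : ∀ᵐ ω ∂μ, 0 < πX ω)
    (mstar : Ω → ℝ) (hmstar : mstar =ᵐ[μ] μ[Y | mX])
    (mbar : Ω → ℝ) (hmbar : Measurable[mX] mbar)
    (w : Ω → ℝ) (hw : Measurable[mX] w) (hw01 : ∀ ω, w ω ∈ Set.Ioc (0 : ℝ) 1)
    (hYint : Integrable Y μ)
    (hint1 : Integrable (fun ω => ((R ω - w ω) / w ω) * (Y ω - mbar ω)) μ)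
    (hint2 : Integrable (fun ω => ((πX ω - w ω) / w ω) * (mstar ω - mbar ω)) μ) :
    ((∫ ω, ((R ω - w ω) / w ω) * (Y ω - mbar ω) ∂μ) =
        ∫ ω, ((πX ω - w ω) / w ω) * (mstar ω - mbar ω) ∂μ) ∧
      (w =ᵐ[μ] πX → (∫ ω, ((R ω - w ω) / w ω) * (Y ω - mbar ω) ∂μ) = 0) ∧
      (mbar =ᵐ[μ] mstar → (∫ ω, ((R ω - w ω) / w ω) * (Y ω - mbar ω) ∂μ) = 0) := by
  have hwpos : ∀ ω, 0 < w ω := fun ω => (hw01 ω).1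
  have hwle : ∀ ω, w ω ≤ 1 := fun ω => (hw01 ω).2
  have hwne : ∀ ω, w ω ≠ 0 := fun ω => (hwpos ω).ne'
  have hwmeas : Measurable[mΩ] w := hw.mono hmX le_rfl
  have hπmeas : Measurable[mΩ] πX := hπX.mono hmX le_rfl
  have hmbarMeas : Measurable[mΩ] mbar := hmbar.mono hmX le_rfl
  haveI : (ae μ).NeBot := ae_neBot.mpr (by
    intro h
    have h1 := measure_univ (μ := μ)
    rw [h] at h1
    simp at h1)
  -- R is integrable
  have hRint : Integrable R μ := by
    by_contra hR
    have h0 : (μ[R|mX]) = 0 := condExp_of_not_integrable hR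
    have hfalse : ∀ᵐ (_ : Ω) ∂μ, False := by
      filter_upwards [hπ, hπpos] with ω h1 h2
      rw [h0] at h1
      simp only [Pi.zero_apply] at h1
      rw [h1] at h2
      exact lt_irrefl 0 h2
    rcases hfalse.exists with ⟨_, h⟩
    exact h
  have hRbd : ∀ ω, ‖R ω‖ ≤ 1 := by
    intro ω
    rcases hR01 ω with h | h <;> simp [h]
  -- measurable modifications
  have hRaesm : AEStronglyMeasurable[mΩ] R μ := hRint.1
  set A : Set Ω := (hRaesm.mk R) ⁻¹' {1} with hA_def
  have hAmeas : MeasurableSet[mΩ] A :=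
    hRaesm.stronglyMeasurable_mk.measurable (measurableSet_singleton 1)
  have hRA : R =ᵐ[μ] A.indicator (fun _ => (1:ℝ)) := by
    filter_upwards [hRaesm.ae_eq_mk] with ω hω
    rcases hR01 ω with h | h
    · have hne : ω ∉ A := by
        simp only [hA_def, Set.mem_preimage, Set.mem_singleton_iff, ← hω, h]
        norm_num
      rw [Set.indicator_of_notMem hne, h]
    · have hmem : ω ∈ A := by
        simp only [hA_def, Set.mem_preimage, Set.mem_singleton_iff, ← hω, h]
      rw [Set.indicator_of_mem hmem, h]
  have hYaesm : AEStronglyMeasurable[mΩ] Y μ := hYint.1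
  set Y' : Ω → ℝ := hYaesm.mk Y with hY'_def
  have hY'm : Measurable[mΩ] Y' := hYaesm.stronglyMeasurable_mk.measurable
  have hYY' : Y =ᵐ[μ] Y' := hYaesm.ae_eq_mk
  have hY'int : Integrable Y' μ := hYint.congr hYY'
  -- conditional independence for the modifications
  have hCI' : CondIndepFun mX hmX (A.indicator fun _ => (1:ℝ)) Y' μ :=
    condIndepFun_congr_ae_aux hmX hMAR hRA hYY'
  have hprod0 := condexp_indicator_mul_of_condIndepFun hmX hAmeas hY'm hY'int hCI'
  have hcondA : (μ⟦A | mX⟧) =ᵐ[μ] πX :=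
    (condExp_congr_ae hRA.symm).trans hπ.symm
  have hcondY : (μ[Y' | mX]) =ᵐ[μ] mstar :=
    (condExp_congr_ae hYY'.symm).trans hmstar.symm
  -- product rule for the conditional expectation
  have hprod : (μ[fun ω => R ω * Y ω | mX]) =ᵐ[μ] fun ω => πX ω * mstar ω := by
    have h1 : (fun ω => R ω * Y ω) =ᵐ[μ]
        fun ω => A.indicator (fun _ => (1:ℝ)) ω * Y' ω := hRA.mul hYY'
    refine (condExp_congr_ae h1).trans (hprod0.trans ?_)
    filter_upwards [hcondA, hcondY] with ω h2 h3
    rw [h2, h3]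
  -- bounds and integrability of πX, mstar
  have hπbd : ∀ᵐ ω ∂μ, ‖πX ω‖ ≤ 1 := by
    have hce1 : (μ[R|mX]) ≤ᵐ[μ] μ[(fun _ => (1:ℝ))|mX] :=
      condExp_mono hRint (integrable_const 1)
        (Eventually.of_forall fun ω => by
          rcases hR01 ω with h | h <;> simp [h])
    rw [condExp_const hmX] at hce1
    filter_upwards [hπ, hπpos, hce1] with ω h1 h2 h3
    rw [Real.norm_eq_abs, abs_of_pos h2, h1]
    exact h3
  have hπint : Integrable πX μ :=
    (integrable_const (1:ℝ)).mono' hπmeas.aestronglyMeasurable hπbd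
  have hmstar_int : Integrable mstar μ := integrable_condExp.congr hmstar.symm
  -- the auxiliary functions
  set T : Ω → ℝ := fun ω => (R ω * Y ω - πX ω * mstar ω) - (R ω - πX ω) * mbar ω with hT_def
  set F : Ω → ℝ := fun ω => (w ω)⁻¹ * T ω with hF_def
  -- pointwise algebraic identity
  have hptw : ∀ ω, ((R ω - w ω) / w ω) * (Y ω - mbar ω)
      = ((πX ω - w ω) / w ω) * (mstar ω - mbar ω) + F ω - (Y ω - mstar ω) := by
    intro ω
    have hne := hwne ω
    simp only [hF_def, hT_def]
    field_simp
    ring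
  -- integrability of F and T
  have hYms_int : Integrable (fun ω => Y ω - mstar ω) μ := hYint.sub hmstar_int
  have hFint : Integrable F μ := by
    refine ((hint1.sub hint2).add hYms_int).congr ?_
    refine Eventually.of_forall fun ω => ?_
    have := hptw ω
    simp only [Pi.add_apply, Pi.sub_apply]
    linarith
  have hTaesm : AEStronglyMeasurable[mΩ] T μ := by
    have h1 : AEStronglyMeasurable[mΩ] (fun ω => w ω * F ω) μ :=
      hwmeas.aestronglyMeasurable.mul hFint.1
    refine h1.congr (Eventually.of_forall fun ω => ?_)
    simp only [hF_def]
    rw [← mul_assoc, mul_inv_cancel₀ (hwne ω), one_mul]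
  have hTint : Integrable T μ := by
    refine hFint.mono hTaesm (Eventually.of_forall fun ω => ?_)
    have h1 : T ω = w ω * F ω := by
      simp only [hF_def]
      rw [← mul_assoc, mul_inv_cancel₀ (hwne ω), one_mul]
    rw [h1, norm_mul]
    have h2 : ‖w ω‖ ≤ 1 := by
      rw [Real.norm_eq_abs, abs_of_pos (hwpos ω)]; exact hwle ω
    calc ‖w ω‖ * ‖F ω‖ ≤ 1 * ‖F ω‖ :=
          mul_le_mul_of_nonneg_right h2 (norm_nonneg _)
      _ = ‖F ω‖ := one_mul _
  -- integrability of the pieces of T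
  have hRY_int : Integrable (fun ω => R ω * Y ω) μ := by
    refine hYint.mono (hRaesm.mul hYaesm) (Eventually.of_forall fun ω => ?_)
    rw [norm_mul]
    calc ‖R ω‖ * ‖Y ω‖ ≤ 1 * ‖Y ω‖ :=
          mul_le_mul_of_nonneg_right (hRbd ω) (norm_nonneg _)
      _ = ‖Y ω‖ := one_mul _
  have hpm_int : Integrable (fun ω => πX ω * mstar ω) μ :=
    hmstar_int.bdd_mul hπmeas.aestronglyMeasurable hπbd
  have hT1int : Integrable (fun ω => R ω * Y ω - πX ω * mstar ω) μ := hRY_int.sub hpm_int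
  have hT2int : Integrable (fun ω => (R ω - πX ω) * mbar ω) μ := by
    refine (hT1int.sub hTint).congr (Eventually.of_forall fun ω => ?_)
    simp only [hT_def, Pi.sub_apply]
    ring
  -- conditional expectations vanish
  have hπce : (μ[πX | mX]) = πX :=
    condExp_of_stronglyMeasurable hmX hπX.stronglyMeasurable hπint
  have hceT1 : (μ[fun ω => R ω * Y ω - πX ω * mstar ω | mX]) =ᵐ[μ] 0 := by
    have hsub := condExp_sub (m := mX) hRY_int hpm_int
    have hpmce : (μ[fun ω => πX ω * mstar ω | mX]) =ᵐ[μ] fun ω => πX ω * mstar ω := by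
      have he : (fun ω => πX ω * mstar ω) =ᵐ[μ] fun ω => πX ω * (μ[Y | mX]) ω := by
        filter_upwards [hmstar] with ω hω
        rw [hω]
      have hint' : Integrable (fun ω => πX ω * (μ[Y | mX]) ω) μ :=
        integrable_condExp.bdd_mul hπmeas.aestronglyMeasurable hπbd
      have hce : (μ[fun ω => πX ω * (μ[Y | mX]) ω | mX]) = fun ω => πX ω * (μ[Y | mX]) ω :=
        condExp_of_stronglyMeasurable hmX
          (hπX.stronglyMeasurable.mul stronglyMeasurable_condExp) hint'
      refine (condExp_congr_ae he).trans ?_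
      rw [hce]
      exact he.symm
    have h1 : (μ[fun ω => R ω * Y ω - πX ω * mstar ω | mX]) =ᵐ[μ]
        (μ[fun ω => R ω * Y ω | mX]) - μ[fun ω => πX ω * mstar ω | mX] := hsub
    refine h1.trans ?_
    filter_upwards [hprod, hpmce] with ω h2 h3
    simp only [Pi.sub_apply, Pi.zero_apply, h2, h3]
    ring
  have hceT2 : (μ[fun ω => (R ω - πX ω) * mbar ω | mX]) =ᵐ[μ] 0 := by
    have hcomm : (fun ω => (R ω - πX ω) * mbar ω) =ᵐ[μ]
        mbar * (R - πX) := by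
      refine Eventually.of_forall fun ω => ?_
      simp only [Pi.mul_apply, Pi.sub_apply]
      ring
    have hRπint : Integrable (R - πX) μ := hRint.sub hπint
    have hmbmul_int : Integrable (mbar * (R - πX)) μ := hT2int.congr hcomm
    have hpull := condExp_mul_of_stronglyMeasurable_left (μ := μ) hmbar.stronglyMeasurable
      hmbmul_int hRπint
    have hce0 : (μ[R - πX | mX]) =ᵐ[μ] 0 := by
      have hs := condExp_sub (m := mX) hRint hπint
      refine hs.trans ?_
      rw [hπce]
      filter_upwards [hπ] with ω hω
      simp only [Pi.sub_apply, Pi.zero_apply, hω]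
      ring
    refine ((condExp_congr_ae hcomm).trans hpull).trans ?_
    filter_upwards [hce0] with ω hω
    simp only [Pi.mul_apply, Pi.zero_apply] at hω ⊢
    rw [hω, mul_zero]
  have hceT : (μ[T | mX]) =ᵐ[μ] 0 := by
    have hT_eq : T =ᵐ[μ] (fun ω => R ω * Y ω - πX ω * mstar ω)
        - fun ω => (R ω - πX ω) * mbar ω := by
      refine Eventually.of_forall fun ω => ?_
      simp only [hT_def, Pi.sub_apply]
    have hs := condExp_sub (m := mX) hT1int hT2int
    refine ((condExp_congr_ae hT_eq).trans hs).trans ?_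
    filter_upwards [hceT1, hceT2] with ω h1 h2
    simp only [Pi.sub_apply, Pi.zero_apply] at h1 h2 ⊢
    rw [h1, h2, sub_zero]
  -- integral of F vanishes
  have hFce : (μ[F | mX]) =ᵐ[μ] 0 := by
    have hF_eq : F =ᵐ[μ] (fun ω => (w ω)⁻¹) * T := by
      refine Eventually.of_forall fun ω => ?_
      simp only [hF_def, Pi.mul_apply]
    have hFint' : Integrable ((fun ω => (w ω)⁻¹) * T) μ := hFint.congr hF_eq
    have hpull := condExp_mul_of_stronglyMeasurable_left (μ := μ)
      (hw.inv.stronglyMeasurable) hFint' hTint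
    refine ((condExp_congr_ae hF_eq).trans hpull).trans ?_
    filter_upwards [hceT] with ω hω
    simp only [Pi.mul_apply, Pi.zero_apply] at hω ⊢
    rw [hω, mul_zero]
  have hFzero : ∫ ω, F ω ∂μ = 0 := by
    rw [← integral_condExp hmX (μ := μ) (f := F), integral_congr_ae hFce]
    simp
  have hYmszero : ∫ ω, (Y ω - mstar ω) ∂μ = 0 := by
    rw [integral_sub hYint hmstar_int, integral_congr_ae hmstar,
      integral_condExp hmX]
    ring
  -- main identity
  have hmain : (∫ ω, ((R ω - w ω) / w ω) * (Y ω - mbar ω) ∂μ) =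
      ∫ ω, ((πX ω - w ω) / w ω) * (mstar ω - mbar ω) ∂μ := by
    have heq : (fun ω => ((R ω - w ω) / w ω) * (Y ω - mbar ω)) =
        fun ω => (((πX ω - w ω) / w ω) * (mstar ω - mbar ω) + F ω) - (Y ω - mstar ω) := by
      funext ω
      rw [hptw ω]
    have hsum : Integrable
        (fun ω => ((πX ω - w ω) / w ω) * (mstar ω - mbar ω) + F ω) μ :=
      hint2.add hFint
    rw [heq, integral_sub hsum hYms_int, integral_add hint2 hFint,
      hFzero, hYmszero]
    ring
  refine ⟨hmain, ?_, ?_⟩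
  · intro hwπ
    rw [hmain]
    have hzero : (fun ω => ((πX ω - w ω) / w ω) * (mstar ω - mbar ω)) =ᵐ[μ]
        fun _ => (0:ℝ) := by
      filter_upwards [hwπ] with ω hω
      rw [hω, sub_self, zero_div, zero_mul]
    rw [integral_congr_ae hzero, integral_zero]
  · intro hms
    rw [hmain]
    have hzero : (fun ω => ((πX ω - w ω) / w ω) * (mstar ω - mbar ω)) =ᵐ[μ]
        fun _ => (0:ℝ) := by
      filter_upwards [hms] with ω hω
      rw [hω, sub_self, mul_zero]
    rw [integral_congr_ae hzero, integral_zero]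
end
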